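/- Let [b_1,…,b_n] be any even continued fraction with n ≥ 1. Then P[b_1,…,b_{n−1}, b_n + 2·sgn(b_n)] = l^{−2t_n}·P[b_1,…,b_n] + t_n·l^{−t_n}·(q^{1/2} − q^{−1/2})·P[b_1,…,b_{n−1}], as elements of K = ℚ(l,s) with q = s², q^{1/2} = s. -/
import Mathlib


open scoped BigOperators

/-- Continued fraction value in `ℚ ∪ {∞}`, with `none` playing the role of `∞ = 1/0`.
`[ ] = ∞`, and `[c₁,…,cₙ] = c₁ + 1/[c₂,…,cₙ]` with `x + ∞ = ∞` and `1/∞ = 0`. -/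
def cfVal : List ℤ → Option ℚ
  | [] => none
  | c :: cs =>
    match cfVal cs with
    | none => some (c : ℚ)
    | some x => if x = 0 then none else some ((c : ℚ) + 1 / x)

/-- A continued fraction is positive if every term is at least 1. -/
def PosCF (L : List ℤ) : Prop := ∀ a ∈ L, 1 ≤ a

/-- A continued fraction is even if every term is even and nonzero. -/
def EvenCF (L : List ℤ) : Prop := ∀ b ∈ L, 2 ∣ b ∧ b ≠ 0

/-- `ell L i = ℓ_i = |c₁| + ⋯ + |c_i|`. -/
def ell (L : List ℤ) (i : ℕ) : ℕ := ((L.take i).map Int.natAbs).sum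

/-- `typ L i = t_i = (−1)^(i−1)·sgn(c_i)` for `1 ≤ i ≤ n`, with the convention `t_0 = −1`. -/
def typ (L : List ℤ) (i : ℕ) : ℤ :=
  if i = 0 then -1 else (-1) ^ (i - 1) * Int.sign (L.getD (i - 1) 0)

noncomputable section

/-- The field `K = ℚ(l,s)` of rational functions in two variables over `ℚ`. -/
abbrev KK : Type := FractionRing (MvPolynomial (Fin 2) ℚ)

/-- The variable `l` of `K = ℚ(l,s)`. -/
def lK : KK := algebraMap (MvPolynomial (Fin 2) ℚ) KK (MvPolynomial.X 0)

/-- The variable `s = q^{1/2}` of `K = ℚ(l,s)`. -/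
def sK : KK := algebraMap (MvPolynomial (Fin 2) ℚ) KK (MvPolynomial.X 1)

/-- `q = s²`. -/
def qK : KK := sK ^ 2

/-- `w = (1 − l²q)/(1 − q⁻¹)`. -/
def wK : KK := (1 - lK ^ 2 * qK) / (1 - qK⁻¹)

/-- The values of the specialization `φ_P` (associated to the even continued fraction `L`,
which only matters through the sign of `b₁`): `y₁ ↦ l²·w⁻¹` if `b₁ > 0` and `y₁ ↦ q⁻²·w`
if `b₁ < 0`; `y_{2i} ↦ −l²q` and `y_{2i+1} ↦ −q⁻¹` for `i ≥ 1`. -/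
def phiPvar (L : List ℤ) (i : ℕ) : KK :=
  if i = 1 then (if 0 < L.headI then lK ^ 2 * wK⁻¹ else qK⁻¹ ^ 2 * wK)
  else if i % 2 = 0 then -(lK ^ 2 * qK) else -qK⁻¹

/-- The specialization `φ_P : ℤ[y₁,y₂,…] → K`. -/
def phiP (L : List ℤ) (p : MvPolynomial ℕ ℤ) : KK :=
  MvPolynomial.eval₂ (Int.castRingHom KK) (phiPvar L) p

end

noncomputable section

/-- Duzhin's recursion for the HOMFLY polynomial of a rational link, computed on the
*reversed* list `[bₙ, …, b₁]`: `P[] = 1`, in the degenerate case the value is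
`(l − l⁻¹)/(q^{1/2} − q^{−1/2})`, and
`P₀ = l^{−tₙ|bₙ|}·P₂ + (q^{1/2} − q^{−1/2})·((1 − l^{−tₙ|bₙ|})/(l − l⁻¹))·P₁`. -/
def PhomRev : List ℤ → KK
  | [] => 1
  | [b] =>
    lK ^ (-(Int.sign b * (b.natAbs : ℤ))) * ((lK - lK⁻¹) / (sK - sK⁻¹)) +
      (sK - sK⁻¹) * ((1 - lK ^ (-(Int.sign b * (b.natAbs : ℤ)))) / (lK - lK⁻¹)) * 1
  | b :: c :: bs =>
    lK ^ (-((-1 : ℤ) ^ (bs.length + 1) * Int.sign b * (b.natAbs : ℤ))) * PhomRev bs +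
      (sK - sK⁻¹) *
        ((1 - lK ^ (-((-1 : ℤ) ^ (bs.length + 1) * Int.sign b * (b.natAbs : ℤ)))) /
          (lK - lK⁻¹)) * PhomRev (c :: bs)

/-- The HOMFLY polynomial `P[b₁,…,bₙ]` of the rational link `C([b₁,…,bₙ])`. -/
def Phom (L : List ℤ) : KK := PhomRev L.reverse

/-- The monomial `m[b₁,…,bₙ]`, computed on the reversed list `[bₙ,…,b₁]`:
`m[] = 1`, `m` in the degenerate case is `−l⁻¹ q^{−1/2} w`, and otherwise
`m = −l q^{1/2} m₁` if `tₙ = −1`, `m = l^{−|bₙ|} m₂` if `t_{n−1} = −1, tₙ = 1`,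
`m = l^{1−|bₙ|} q^{1/2} m₁` if `t_{n−1} = 1, tₙ = 1` (with `t₀ = −1`). -/
def mRev : List ℤ → KK
  | [] => 1
  | [b] =>
    if Int.sign b = -1 then -(lK * sK)
    else lK ^ (-(b.natAbs : ℤ)) * (-(lK⁻¹ * sK⁻¹) * wK)
  | b :: c :: bs =>
    if (-1 : ℤ) ^ (bs.length + 1) * Int.sign b = -1 then -(lK * sK) * mRev (c :: bs)
    else if (-1 : ℤ) ^ bs.length * Int.sign c = -1 then
      lK ^ (-(b.natAbs : ℤ)) * mRev bs
    else lK ^ ((1 : ℤ) - (b.natAbs : ℤ)) * sK * mRev (c :: bs)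

/-- `m[b₁,…,bₙ]`. -/
def mFun (L : List ℤ) : KK := mRev L.reverse

end


lemma lK_ne_zero : lK ≠ 0 := by
  simp only [lK]
  rw [Ne, map_eq_zero_iff _ (IsFractionRing.injective (MvPolynomial (Fin 2) ℚ) KK)]
  exact MvPolynomial.X_ne_zero 0

lemma lK_sq_ne_one : lK ^ 2 ≠ 1 := by
  intro h
  have h2 : (algebraMap (MvPolynomial (Fin 2) ℚ) KK) ((MvPolynomial.X 0) ^ 2) =
      (algebraMap (MvPolynomial (Fin 2) ℚ) KK) 1 := by
    simpa [lK, map_pow] using h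
  have h3 := IsFractionRing.injective (MvPolynomial (Fin 2) ℚ) KK h2
  have h4 := congrArg (MvPolynomial.eval (fun _ => (2:ℚ))) h3
  simp at h4
  norm_num at h4

lemma lK_sub_inv_ne_zero : lK - lK⁻¹ ≠ 0 := by
  intro h
  apply lK_sq_ne_one
  have h2 : lK = lK⁻¹ := sub_eq_zero.mp h
  calc lK ^ 2 = lK * lK := sq lK
    _ = lK * lK⁻¹ := by rw [← h2]
    _ = 1 := mul_inv_cancel₀ lK_ne_zero

lemma key (t a : ℤ) (ht : t = 1 ∨ t = -1) (P1 P2 : KK) :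
    lK ^ (-(t * (a + 2))) * P2 +
        (sK - sK⁻¹) * ((1 - lK ^ (-(t * (a + 2)))) / (lK - lK⁻¹)) * P1 =
      lK ^ (-(2 * t)) *
          (lK ^ (-(t * a)) * P2 + (sK - sK⁻¹) * ((1 - lK ^ (-(t * a))) / (lK - lK⁻¹)) * P1) +
        (t : KK) * lK ^ (-t) * (sK - sK⁻¹) * P1 := by
  have hl0 := lK_ne_zero
  have hll := lK_sub_inv_ne_zero
  have h2p : lK ^ (2 : ℤ) = lK ^ 2 := by
    rw [show (2:ℤ) = ((2:ℕ):ℤ) from rfl, zpow_natCast]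
  have h2n : lK ^ (-2 : ℤ) = (lK ^ 2)⁻¹ := by
    rw [show (-2:ℤ) = -(2:ℤ) from rfl, zpow_neg, h2p]
  have h1n : lK ^ (-1 : ℤ) = lK⁻¹ := by
    rw [show (-1:ℤ) = -(1:ℤ) from rfl, zpow_neg, zpow_one]
  have h22 : (lK ^ 2)⁻¹ = lK⁻¹ * lK⁻¹ := by rw [sq, mul_inv]
  have hil : lK⁻¹ * lK = 1 := inv_mul_cancel₀ hl0
  rcases ht with rfl | rfl
  · have hsc : ∀ u : KK, (1 - u * (lK ^ 2)⁻¹) / (lK - lK⁻¹) =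
        (lK ^ 2)⁻¹ * ((1 - u) / (lK - lK⁻¹)) + lK⁻¹ := by
      intro u
      have key0 : (1 : KK) - u * (lK ^ 2)⁻¹ =
          (lK ^ 2)⁻¹ * (1 - u) + lK⁻¹ * (lK - lK⁻¹) := by
        rw [h22]; linear_combination -hil
      rw [div_eq_iff hll, add_mul, mul_assoc, div_mul_cancel₀ _ hll]
      linear_combination key0
    have e1 : -((1:ℤ) * (a + 2)) = -a + (-2) := by ring
    have e2 : -((1:ℤ) * a) = -a := by ring
    have e3 : -((2:ℤ) * 1) = -2 := by ring
    have e4 : -(1:ℤ) = -1 := rfl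
    rw [e1, e2, e3, e4, zpow_add₀ hl0, h2n, h1n, hsc (lK ^ (-a))]
    push_cast
    ring
  · have hsc : ∀ u : KK, (1 - u * lK ^ 2) / (lK - lK⁻¹) =
        lK ^ 2 * ((1 - u) / (lK - lK⁻¹)) + -(lK) := by
      intro u
      have key0 : (1 : KK) - u * lK ^ 2 =
          lK ^ 2 * (1 - u) + -(lK) * (lK - lK⁻¹) := by
        linear_combination -mul_inv_cancel₀ hl0
      rw [div_eq_iff hll, add_mul, mul_assoc, div_mul_cancel₀ _ hll]
      linear_combination key0
    have e1 : -((-1:ℤ) * (a + 2)) = a + 2 := by ring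
    have e2 : -((-1:ℤ) * a) = a := by ring
    have e3 : -((2:ℤ) * (-1)) = 2 := by ring
    have e4 : -(-1:ℤ) = 1 := rfl
    rw [e1, e2, e3, e4, zpow_add₀ hl0, h2p, zpow_one, hsc (lK ^ a)]
    push_cast
    ring

/-- For an even continued fraction `[b₁,…,bₙ]` with `n ≥ 1`,
`P[b₁,…,b_{n−1}, bₙ + 2·sgn(bₙ)] = l^{−2tₙ}·P[b₁,…,bₙ] + tₙ·l^{−tₙ}·(q^{1/2} − q^{−1/2})·P[b₁,…,b_{n−1}]`. -/
theorem homfly_plus_two_step (L : List ℤ) (hL : EvenCF L) (hne : L ≠ []) :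
    Phom (L.dropLast ++ [L.getLast hne + 2 * Int.sign (L.getLast hne)]) =
      lK ^ (-(2 * typ L L.length)) * Phom L +
        (typ L L.length : KK) * lK ^ (-typ L L.length) * (sK - sK⁻¹) * Phom L.dropLast := by
  obtain ⟨M, b, rfl⟩ : ∃ M b, L = M ++ [b] :=
    ⟨L.dropLast, L.getLast hne, (List.dropLast_append_getLast hne).symm⟩
  have hb : 2 ∣ b ∧ b ≠ 0 := hL b (by simp)
  have hs1 : b.sign = 1 ∨ b.sign = -1 := by
    rcases hb.2.lt_or_gt with h | h
    · exact Or.inr (Int.sign_eq_neg_one_iff_neg.mpr h)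
    · exact Or.inl (Int.sign_eq_one_iff_pos.mpr h)
  have hsgn : (b + 2 * b.sign).sign = b.sign := by
    rcases hb.2.lt_or_gt with h | h
    · rw [Int.sign_eq_neg_one_iff_neg.mpr h]
      exact Int.sign_eq_neg_one_iff_neg.mpr (by omega)
    · rw [Int.sign_eq_one_iff_pos.mpr h]
      exact Int.sign_eq_one_iff_pos.mpr (by omega)
  have habs : (((b + 2 * b.sign).natAbs : ℤ)) = (b.natAbs : ℤ) + 2 := by
    rcases hb.2.lt_or_gt with h | h
    · rw [Int.sign_eq_neg_one_iff_neg.mpr h]; omega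
    · rw [Int.sign_eq_one_iff_pos.mpr h]; omega
  have hlast : (M ++ [b]).getLast hne = b := by simp [List.getLast_append]
  have hdrop : (M ++ [b]).dropLast = M := by simp
  have htyp : typ (M ++ [b]) (M ++ [b]).length = (-1) ^ M.length * b.sign := by
    simp [typ]
  rw [hlast, hdrop, htyp]
  rcases hMr : M.reverse with _ | ⟨c, bs⟩
  · have hM : M = [] := by simpa using congrArg List.reverse hMr
    subst hM
    simp only [List.nil_append, List.length_nil, pow_zero, one_mul, Phom,
      List.reverse_cons, List.reverse_nil]
    simp only [PhomRev]
    rw [show -(Int.sign (b + 2 * Int.sign b) * (((b + 2 * Int.sign b).natAbs : ℤ))) =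
        -(b.sign * ((b.natAbs : ℤ) + 2)) from by rw [hsgn, habs]]
    exact key b.sign (b.natAbs : ℤ) hs1 1 ((lK - lK⁻¹) / (sK - sK⁻¹))
  · have hM : M = (c :: bs).reverse := by rw [← hMr, List.reverse_reverse]
    subst hM
    have hlen : ((c :: bs).reverse).length = bs.length + 1 := by simp
    rw [hlen]
    have ht : (-1 : ℤ) ^ (bs.length + 1) * b.sign = 1 ∨
        (-1 : ℤ) ^ (bs.length + 1) * b.sign = -1 := by
      rcases neg_one_pow_eq_or ℤ (bs.length + 1) with h | h <;>
        rcases hs1 with h2 | h2 <;> rw [h, h2] <;> norm_num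
    simp only [Phom, List.reverse_append, List.reverse_reverse, List.reverse_cons,
      List.reverse_nil, List.nil_append, List.singleton_append]
    simp only [PhomRev]
    rw [show -((-1 : ℤ) ^ (bs.length + 1) * Int.sign (b + 2 * Int.sign b) *
          (((b + 2 * Int.sign b).natAbs : ℤ))) =
        -(((-1 : ℤ) ^ (bs.length + 1) * b.sign) * ((b.natAbs : ℤ) + 2)) from by
          rw [hsgn, habs]]
    exact key _ _ ht (PhomRev (c :: bs)) (PhomRev bs)
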